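/- Let X be a nonnegative real-valued random variable with mean μ and variance σ², and let c ≥ 0 be a constant. Then E[min{X, c}] ≥ min{c, μ/2}·(1 − 4σ²/(4σ² + μ²)). -/

import Mathlib

open MeasureTheory ProbabilityTheory

theorem expectation_min_lower_bound
    {Ω : Type*} [MeasureSpace Ω] [IsProbabilityMeasure (ℙ : Measure Ω)]
    (X : Ω → ℝ) (hX : ∀ ω, 0 ≤ X ω) (hX2 : MemLp X 2 ℙ)
    (c : ℝ) (hc : 0 ≤ c) :
    min c ((∫ ω, X ω) / 2) *
        (1 - 4 * variance X ℙ / (4 * variance X ℙ + (∫ ω, X ω) ^ 2)) ≤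
      ∫ ω, min (X ω) c := by
  set μ : ℝ := ∫ ω, X ω with hμdef
  have hXint : Integrable X ℙ := hX2.integrable one_le_two
  have hμ0 : 0 ≤ μ := integral_nonneg hX
  have hgnn : ∀ ω, 0 ≤ min (X ω) c := fun ω => le_min (hX ω) hc
  have hgmeas : AEStronglyMeasurable (fun ω => min (X ω) c) ℙ :=
    (hX2.aestronglyMeasurable.aemeasurable.min aemeasurable_const).aestronglyMeasurable
  have hgint : Integrable (fun ω => min (X ω) c) ℙ := by
    refine hXint.mono hgmeas (ae_of_all _ fun ω => ?_)
    rw [Real.norm_eq_abs, Real.norm_eq_abs, abs_of_nonneg (hgnn ω), abs_of_nonneg (hX ω)]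
    exact min_le_left _ _
  have hRHSnn : 0 ≤ ∫ ω, min (X ω) c := integral_nonneg hgnn
  rcases eq_or_lt_of_le hμ0 with hμ | hμ
  · rw [← hμ]
    have h0 : min c ((0 : ℝ) / 2) = 0 := by norm_num [min_eq_right hc]
    rw [h0, zero_mul]
    exact hRHSnn
  set σ2 : ℝ := variance X ℙ with hσdef
  have hσ0 : 0 ≤ σ2 := variance_nonneg X ℙ
  have hD : 0 < 4 * σ2 + μ ^ 2 := by positivity
  have hμne : μ ≠ 0 := ne_of_gt hμ
  have hDne : 4 * σ2 + μ ^ 2 ≠ 0 := ne_of_gt hD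
  set t : ℝ := 2 * σ2 / μ with htdef
  have ht0 : 0 ≤ t := by positivity
  set ε : ℝ := t + μ / 2 with hεdef
  have hε : 0 < ε := by positivity
  -- second moment computation
  have hsq : Integrable (fun ω => X ω ^ 2) ℙ := hX2.integrable_sq
  have hEX2 : ∫ ω, X ω ^ 2 = σ2 + μ ^ 2 := by
    have h := variance_eq_sub hX2
    simp only [Pi.pow_apply] at h
    rw [hσdef, h, ← hμdef]; ring
  have hfint2 : Integrable (fun ω => X ω ^ 2 - 2 * (μ + t) * X ω) ℙ :=
    hsq.sub (hXint.const_mul _)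
  have hfint : Integrable (fun ω => (X ω - (μ + t)) ^ 2) ℙ := by
    have h1 : (fun ω => (X ω - (μ + t)) ^ 2) =
        fun ω => X ω ^ 2 - 2 * (μ + t) * X ω + (μ + t) ^ 2 := by funext ω; ring
    rw [h1]; exact hfint2.add (integrable_const _)
  have hEf : ∫ ω, (X ω - (μ + t)) ^ 2 = σ2 + t ^ 2 := by
    have h1 : (fun ω => (X ω - (μ + t)) ^ 2) =
        fun ω => X ω ^ 2 - 2 * (μ + t) * X ω + (μ + t) ^ 2 := by funext ω; ring
    have hcm : Integrable (fun ω => 2 * (μ + t) * X ω) ℙ := hXint.const_mul _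
    rw [h1, integral_add hfint2 (integrable_const _), integral_sub hsq hcm,
      integral_const_mul, hEX2, ← hμdef, integral_const]
    simp only [measure_univ, probReal_univ, ENNReal.toReal_one, smul_eq_mul, one_mul]
    ring
  -- Cantelli
  set A : Set Ω := {ω | X ω ≤ μ / 2} with hAdef
  have hAnull : NullMeasurableSet A ℙ :=
    hX2.aestronglyMeasurable.aemeasurable.nullMeasurable measurableSet_Iic
  have hmarkov1 := mul_meas_ge_le_integral_of_nonneg
    (ae_of_all ℙ fun ω => sq_nonneg (X ω - (μ + t))) hfint (ε ^ 2)
  rw [hEf] at hmarkov1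
  have hsub1 : A ⊆ {ω | ε ^ 2 ≤ (X ω - (μ + t)) ^ 2} := by
    intro ω hω
    have hω' : X ω ≤ μ / 2 := hω
    have h1 : ε ≤ (μ + t) - X ω := by rw [hεdef]; linarith
    calc ε ^ 2 ≤ ((μ + t) - X ω) ^ 2 := by nlinarith
    _ = (X ω - (μ + t)) ^ 2 := by ring
  have h2 : ε ^ 2 * (ℙ A).toReal ≤ σ2 + t ^ 2 := by
    calc ε ^ 2 * (ℙ A).toReal
        ≤ ε ^ 2 * (ℙ {ω | ε ^ 2 ≤ (X ω - (μ + t)) ^ 2}).toReal :=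
          mul_le_mul_of_nonneg_left
            (ENNReal.toReal_mono (measure_ne_top _ _) (measure_mono hsub1)) (sq_nonneg _)
      _ ≤ σ2 + t ^ 2 := hmarkov1
  have hPA : (ℙ A).toReal ≤ 4 * σ2 / (4 * σ2 + μ ^ 2) := by
    have hεeq : ε ^ 2 = (4 * σ2 + μ ^ 2) ^ 2 / (4 * μ ^ 2) := by
      rw [hεdef, htdef]; field_simp; ring
    have hval : (σ2 + t ^ 2) / ε ^ 2 = 4 * σ2 / (4 * σ2 + μ ^ 2) := by
      rw [htdef, hεeq]; field_simp; ring
    calc (ℙ A).toReal ≤ (σ2 + t ^ 2) / ε ^ 2 := by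
          rw [le_div_iff₀ (by positivity)]
          linarith [h2, mul_comm (ε ^ 2) ((ℙ A).toReal)]
      _ = _ := hval
  -- lower bound
  set m : ℝ := min c (μ / 2) with hmdef
  have hm0 : 0 ≤ m := le_min hc (by positivity)
  have hmarkov2 := mul_meas_ge_le_integral_of_nonneg (ae_of_all ℙ hgnn) hgint m
  have hsub2 : Aᶜ ⊆ {ω | m ≤ min (X ω) c} := by
    intro ω hω
    simp only [hAdef, Set.mem_compl_iff, Set.mem_setOf_eq, not_le] at hω
    exact le_min (le_trans (min_le_right _ _) hω.le) (min_le_left _ _)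
  have hPAc : 1 - (ℙ A).toReal ≤ (ℙ {ω | m ≤ min (X ω) c}).toReal := by
    have h1 : ℙ Aᶜ = 1 - ℙ A := by
      rw [measure_compl₀ hAnull (measure_ne_top _ _), measure_univ]
    have h2' : (ℙ Aᶜ).toReal = 1 - (ℙ A).toReal := by
      rw [h1, ENNReal.toReal_sub_of_le prob_le_one ENNReal.one_ne_top]
      simp
    rw [← h2']
    exact ENNReal.toReal_mono (measure_ne_top _ _) (measure_mono hsub2)
  calc m * (1 - 4 * σ2 / (4 * σ2 + μ ^ 2))
      ≤ m * (1 - (ℙ A).toReal) := mul_le_mul_of_nonneg_left (by linarith) hm0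
    _ ≤ m * (ℙ {ω | m ≤ min (X ω) c}).toReal := mul_le_mul_of_nonneg_left hPAc hm0
    _ ≤ ∫ ω, min (X ω) c := hmarkov2
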